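/- There exist r > 0 with the closed disk of radius r about t₀ contained in U, and a constant M, such that hₙ(t) = 4^{−n}·log max( |Aₙ(t)/(t−t₀)^{aₙ}|, |Bₙ(t)/(t−t₀)^{aₙ}| ) satisfies hₙ(t) ≤ M for all n ≥ 0 and all t with 0 < |t − t₀| ≤ r. -/

import Mathlib

open Filter

/-- The family of homogeneous degree-4 maps `F_t(z,w) = (Σ_j c₀ⱼ(t)·zʲ·w⁴⁻ʲ, Σ_j c₁ⱼ(t)·zʲ·w⁴⁻ʲ)`
determined by the coefficient functions `c : Fin 2 → Fin 5 → ℂ → ℂ`. -/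
noncomputable def famLift (c : Fin 2 → Fin 5 → ℂ → ℂ) (t : ℂ) : ℂ × ℂ → ℂ × ℂ :=
  fun X => (∑ j : Fin 5, c 0 j t * X.1 ^ (j : ℕ) * X.2 ^ (4 - (j : ℕ)),
            ∑ j : Fin 5, c 1 j t * X.1 ^ (j : ℕ) * X.2 ^ (4 - (j : ℕ)))

lemma contOn_sum {α M ι : Type*} [TopologicalSpace α] [AddCommMonoid M] [TopologicalSpace M]
    [ContinuousAdd M] (s : Finset ι) (f : ι → α → M) (t : Set α)
    (h : ∀ i ∈ s, ContinuousOn (f i) t) :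
    ContinuousOn (fun x => ∑ i ∈ s, f i x) t := by
  classical
  induction s using Finset.induction_on with
  | empty => simpa using continuousOn_const
  | @insert i s hi ih =>
    simp only [Finset.sum_insert hi]
    exact (h i (Finset.mem_insert_self i s)).add
      (ih fun j hj => h j (Finset.mem_insert_of_mem hj))

lemma famLift_smul (c : Fin 2 → Fin 5 → ℂ → ℂ) (t s : ℂ) (Y : ℂ × ℂ) :
    famLift c t (s • Y) = (s ^ 4) • famLift c t Y := by
  have key : ∀ i : Fin 2,
      ∑ j : Fin 5, c i j t * (s • Y).1 ^ (j : ℕ) * (s • Y).2 ^ (4 - (j : ℕ))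
        = s ^ 4 * ∑ j : Fin 5, c i j t * Y.1 ^ (j : ℕ) * Y.2 ^ (4 - (j : ℕ)) := by
    intro i
    rw [Finset.mul_sum]
    refine Finset.sum_congr rfl fun j _ => ?_
    have hj : (j : ℕ) + (4 - (j : ℕ)) = 4 := by have := j.isLt; omega
    have h1 : (s • Y).1 = s * Y.1 := rfl
    have h2 : (s • Y).2 = s * Y.2 := rfl
    calc c i j t * (s • Y).1 ^ (j : ℕ) * (s • Y).2 ^ (4 - (j : ℕ))
        = (s ^ (j : ℕ) * s ^ (4 - (j : ℕ))) * (c i j t * Y.1 ^ (j : ℕ) * Y.2 ^ (4 - (j : ℕ))) := by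
          rw [h1, h2, mul_pow, mul_pow]; ring
      _ = s ^ 4 * (c i j t * Y.1 ^ (j : ℕ) * Y.2 ^ (4 - (j : ℕ))) := by
          rw [← pow_add, hj]
  unfold famLift
  refine Prod.ext ?_ ?_
  · simpa using key 0
  · simpa using key 1

set_option maxHeartbeats 1600000 in
/-- With `F_tⁿ(X(t)) = (Aₙ(t), Bₙ(t))` and `aₙ = min(ord_{t₀} Aₙ, ord_{t₀} Bₙ)`:
there are `r > 0` with the closed disk of radius `r` about `t₀` contained in `U`, and a
constant `M`, so that `hₙ(t) = 4^{−n} log max(|Aₙ(t)/(t−t₀)^{aₙ}|, |Bₙ(t)/(t−t₀)^{aₙ}|)`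
satisfies `hₙ(t) ≤ M` for all `n ≥ 0` and all `t` with `0 < |t − t₀| ≤ r`. -/
theorem hn_uniformly_bounded (U : Set ℂ) (hU : IsOpen U) (hUconn : IsConnected U)
    (t₀ : ℂ) (ht₀ : t₀ ∈ U)
    (c : Fin 2 → Fin 5 → ℂ → ℂ) (hc : ∀ i j, DifferentiableOn ℂ (c i j) U)
    (hzero : ∀ t ∈ U, t ≠ t₀ → ∀ Y : ℂ × ℂ, famLift c t Y = 0 → Y = 0)
    (X : ℂ → ℂ × ℂ) (hX : DifferentiableOn ℂ X U) (hXne : ∀ t ∈ U, X t ≠ 0)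
    (a : ℕ → ℕ)
    (ha : ∀ n : ℕ, ∃ g₁ g₂ : ℂ → ℂ, AnalyticAt ℂ g₁ t₀ ∧ AnalyticAt ℂ g₂ t₀ ∧
      (g₁ t₀ ≠ 0 ∨ g₂ t₀ ≠ 0) ∧
      ∀ᶠ t in nhds t₀, ((famLift c t)^[n] (X t)).1 = (t - t₀) ^ a n * g₁ t ∧
        ((famLift c t)^[n] (X t)).2 = (t - t₀) ^ a n * g₂ t) :
    ∃ r : ℝ, 0 < r ∧ Metric.closedBall t₀ r ⊆ U ∧ ∃ M : ℝ,
      ∀ n : ℕ, ∀ t : ℂ, 0 < ‖t - t₀‖ → ‖t - t₀‖ ≤ r →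
        Real.log (max (‖((famLift c t)^[n] (X t)).1 / (t - t₀) ^ a n‖)
            (‖((famLift c t)^[n] (X t)).2 / (t - t₀) ^ a n‖)) / 4 ^ n ≤ M := by
  classical
  obtain ⟨ε, hεpos, hεU⟩ := Metric.isOpen_iff.mp hU t₀ ht₀
  set R : ℝ := min ε 1 with hRdef
  have hRpos : 0 < R := lt_min hεpos one_pos
  have hR1 : R ≤ 1 := min_le_right _ _
  set r : ℝ := R / 2 with hrdef
  have hrpos : 0 < r := by positivity
  have hrlt : r < R := by simp only [hrdef]; linarith
  have hr1 : r < 1 := lt_of_lt_of_le hrlt hR1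
  have hballU : Metric.ball t₀ R ⊆ U :=
    (Metric.ball_subset_ball (min_le_left _ _)).trans hεU
  have hclU : Metric.closedBall t₀ r ⊆ U :=
    (Metric.closedBall_subset_ball hrlt).trans hballU
  refine ⟨r, hrpos, hclU, ?_⟩
  -- the compact annulus
  set K : Set ℂ := Metric.closedBall t₀ r ∩ {t | r / 2 ≤ dist t t₀} with hKdef
  have hKcomp : IsCompact K :=
    (isCompact_closedBall _ _).inter_right
      (isClosed_le continuous_const (continuous_id.dist continuous_const))
  have hKU : K ⊆ U := fun t ht => hclU ht.1
  have hKt₀ : ∀ t ∈ K, t ≠ t₀ := by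
    intro t ht h
    have h2 := ht.2
    rw [Set.mem_setOf_eq, h, dist_self] at h2
    linarith
  have hmemK : ∀ t : ℂ, r / 2 ≤ ‖t - t₀‖ → ‖t - t₀‖ ≤ r → t ∈ K := by
    intro t h1 h2
    exact ⟨Metric.mem_closedBall.2 (by rwa [Complex.dist_eq]), by rwa [Set.mem_setOf_eq, Complex.dist_eq]⟩
  have ht₁K : (t₀ + (r / 2 : ℝ)) ∈ K := by
    apply hmemK <;> rw [add_sub_cancel_left, Complex.norm_real, Real.norm_eq_abs, abs_of_pos (by positivity)]
    · linarith
  have hKne : K.Nonempty := ⟨_, ht₁K⟩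
  -- the compact unit sphere in ℂ × ℂ
  set S : Set (ℂ × ℂ) := Metric.sphere (0 : ℂ × ℂ) 1 with hSdef
  have hScomp : IsCompact S := isCompact_sphere _ _
  have hSne : S.Nonempty := by
    refine ⟨((1 : ℂ), (0 : ℂ)), ?_⟩
    rw [mem_sphere_zero_iff_norm, Prod.norm_def]
    simp
  set T : Set (ℂ × (ℂ × ℂ)) := K ×ˢ S with hTdef
  have hTcomp : IsCompact T := hKcomp.prod hScomp
  have hTne : T.Nonempty := hKne.prod hSne
  -- continuity of the evaluation
  have hφ : ContinuousOn (fun p : ℂ × (ℂ × ℂ) => ‖famLift c p.1 p.2‖) T := by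
    have h1 : ∀ i : Fin 2, ContinuousOn
        (fun p : ℂ × (ℂ × ℂ) => ∑ j : Fin 5, c i j p.1 * p.2.1 ^ (j : ℕ) * p.2.2 ^ (4 - (j : ℕ))) T := by
      intro i
      apply contOn_sum
      intro j _
      have hcc : ContinuousOn (fun p : ℂ × (ℂ × ℂ) => c i j p.1) T :=
        ((hc i j).continuousOn).comp continuous_fst.continuousOn (fun p hp => hKU hp.1)
      exact (hcc.mul ((continuous_fst.comp continuous_snd).pow _).continuousOn).mul
        ((continuous_snd.comp continuous_snd).pow _).continuousOn
    have hF : ContinuousOn (fun p : ℂ × (ℂ × ℂ) => famLift c p.1 p.2) T := by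
      simp only [famLift]
      exact (h1 0).prodMk (h1 1)
    exact hF.norm
  obtain ⟨pδ, hpδT, hδmin⟩ := hTcomp.exists_isMinOn hTne hφ
  obtain ⟨pC, hpCT, hCmax⟩ := hTcomp.exists_isMaxOn hTne hφ
  have hδmin' : ∀ p ∈ T, ‖famLift c pδ.1 pδ.2‖ ≤ ‖famLift c p.1 p.2‖ :=
    fun p hp => isMinOn_iff.mp hδmin p hp
  have hCmax' : ∀ p ∈ T, ‖famLift c p.1 p.2‖ ≤ ‖famLift c pC.1 pC.2‖ :=
    fun p hp => isMaxOn_iff.mp hCmax p hp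
  set δ : ℝ := ‖famLift c pδ.1 pδ.2‖ with hδdef
  set C : ℝ := ‖famLift c pC.1 pC.2‖ with hCdef
  have hpδK : pδ.1 ∈ K := hpδT.1
  have hpδS : pδ.2 ∈ S := hpδT.2
  have hδpos : 0 < δ := by
    rw [hδdef, norm_pos_iff]
    intro h0
    have h2 := hzero pδ.1 (hKU hpδK) (hKt₀ _ hpδK) pδ.2 h0
    have := mem_sphere_zero_iff_norm.mp hpδS
    rw [h2] at this
    simp at this
  have hδC : δ ≤ C := hδmin' _ hpCT
  have hCpos : 0 < C := lt_of_lt_of_le hδpos hδC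
  -- the scaling estimate
  have hscale : ∀ t ∈ K, ∀ Y : ℂ × ℂ, Y ≠ 0 →
      δ * ‖Y‖ ^ 4 ≤ ‖famLift c t Y‖ ∧ ‖famLift c t Y‖ ≤ C * ‖Y‖ ^ 4 := by
    intro t ht Y hY
    have hYn : ‖Y‖ ≠ 0 := norm_ne_zero_iff.2 hY
    set s : ℂ := (‖Y‖ : ℂ) with hsdef
    have hs : s ≠ 0 := Complex.ofReal_ne_zero.2 hYn
    set W : ℂ × ℂ := s⁻¹ • Y with hWdef
    have hnc : ‖s‖ = ‖Y‖ := by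
      rw [hsdef, Complex.norm_real, Real.norm_eq_abs, abs_of_nonneg (norm_nonneg Y)]
    have hWn : ‖W‖ = 1 := by
      rw [hWdef, norm_smul, norm_inv, hnc]
      exact inv_mul_cancel₀ hYn
    have hYW : Y = s • W := by
      rw [hWdef, smul_smul, mul_inv_cancel₀ hs, one_smul]
    have hnorm : ‖famLift c t Y‖ = ‖Y‖ ^ 4 * ‖famLift c t W‖ := by
      conv_lhs => rw [hYW, famLift_smul]
      rw [norm_smul, norm_pow, hnc]
    have hWT : (t, W) ∈ T := ⟨ht, mem_sphere_zero_iff_norm.2 hWn⟩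
    have h1 : δ ≤ ‖famLift c t W‖ := hδmin' (t, W) hWT
    have h2 : ‖famLift c t W‖ ≤ C := hCmax' (t, W) hWT
    have hp4 : (0:ℝ) ≤ ‖Y‖ ^ 4 := by positivity
    constructor <;> rw [hnorm] <;> nlinarith
  -- differentiability and nonvanishing of the iterates
  have hZdiff : ∀ n, DifferentiableOn ℂ (fun t => (famLift c t)^[n] (X t)) U := by
    intro n
    induction n with
    | zero => simpa using hX
    | succ n ih =>
      have he : (fun t => (famLift c t)^[n + 1] (X t))
          = fun t => famLift c t ((famLift c t)^[n] (X t)) := by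
        funext t; rw [Function.iterate_succ_apply']
      rw [he]
      simp only [famLift]
      exact DifferentiableOn.prodMk
        (DifferentiableOn.fun_sum fun j _ =>
          (((hc 0 j).mul (ih.fst.pow _)).mul (ih.snd.pow _)))
        (DifferentiableOn.fun_sum fun j _ =>
          (((hc 1 j).mul (ih.fst.pow _)).mul (ih.snd.pow _)))
  have hZne : ∀ n, ∀ t ∈ U, t ≠ t₀ → (famLift c t)^[n] (X t) ≠ 0 := by
    intro n
    induction n with
    | zero => intro t ht _; simpa using hXne t ht
    | succ n ih =>
      intro t ht htne h0
      rw [Function.iterate_succ_apply'] at h0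
      exact ih t ht htne (hzero t ht htne _ h0)
  -- bounds for X on K
  have hXcont : ContinuousOn (fun t => ‖X t‖) K := ((hX.mono hKU).continuousOn).norm
  obtain ⟨q₀, hq₀K, hq₀min⟩ := hKcomp.exists_isMinOn hKne hXcont
  obtain ⟨q₁, hq₁K, hq₁max⟩ := hKcomp.exists_isMaxOn hKne hXcont
  have hq₀pos : 0 < ‖X q₀‖ := norm_pos_iff.2 (hXne q₀ (hKU hq₀K))
  set L₀ : ℝ := max (max (-Real.log ‖X q₀‖) (Real.log ‖X q₁‖)) 0 with hL₀def
  set K₀ : ℝ := max (max (Real.log C) (-Real.log δ)) 0 with hK₀def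
  have hL₀nn : 0 ≤ L₀ := le_max_right _ _
  have hK₀nn : 0 ≤ K₀ := le_max_right _ _
  set L : ℝ := L₀ + K₀ / 3 with hLdef
  have hLnn : 0 ≤ L := by positivity
  have hKC : Real.log C ≤ K₀ := le_max_of_le_left (le_max_left _ _)
  have hKd : -Real.log δ ≤ K₀ := le_max_of_le_left (le_max_right _ _)
  have hXq₀L : -Real.log ‖X q₀‖ ≤ L₀ := le_max_of_le_left (le_max_left _ _)
  have hXq₁L : Real.log ‖X q₁‖ ≤ L₀ := le_max_of_le_left (le_max_right _ _)
  clear_value δ C L₀ K₀ L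
  -- the key iterated estimate on the annulus
  have hiter : ∀ n, ∀ t ∈ K,
      -(4 ^ n * L) + K₀ / 3 ≤ Real.log ‖(famLift c t)^[n] (X t)‖ ∧
      Real.log ‖(famLift c t)^[n] (X t)‖ ≤ 4 ^ n * L - K₀ / 3 := by
    intro n
    induction n with
    | zero =>
      intro t ht
      simp only [Function.iterate_zero_apply, pow_zero, one_mul]
      have htpos : 0 < ‖X t‖ := norm_pos_iff.2 (hXne t (hKU ht))
      have h1 : Real.log ‖X q₀‖ ≤ Real.log ‖X t‖ := Real.log_le_log hq₀pos (isMinOn_iff.mp hq₀min t ht)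
      have h2 : Real.log ‖X t‖ ≤ Real.log ‖X q₁‖ := Real.log_le_log htpos (isMaxOn_iff.mp hq₁max t ht)
      constructor <;> linarith [hLdef]
    | succ n ih =>
      intro t ht
      have htU := hKU ht
      have htne := hKt₀ t ht
      have hZt := hZne n t htU htne
      have hpos : 0 < ‖(famLift c t)^[n] (X t)‖ := norm_pos_iff.2 hZt
      have hpos' : 0 < ‖(famLift c t)^[n + 1] (X t)‖ := norm_pos_iff.2 (hZne (n + 1) t htU htne)
      obtain ⟨hlow, hup⟩ := hscale t ht _ hZt
      have hit : (famLift c t)^[n + 1] (X t) = famLift c t ((famLift c t)^[n] (X t)) :=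
        Function.iterate_succ_apply' _ _ _
      have e1 : Real.log ‖(famLift c t)^[n + 1] (X t)‖
          ≤ Real.log C + 4 * Real.log ‖(famLift c t)^[n] (X t)‖ := by
        have hup' : ‖(famLift c t)^[n + 1] (X t)‖
            ≤ C * ‖(famLift c t)^[n] (X t)‖ ^ 4 := by rw [hit]; exact hup
        have h := Real.log_le_log hpos' hup'
        rwa [Real.log_mul hCpos.ne' (by positivity), Real.log_pow, Nat.cast_ofNat] at h
      have e2 : Real.log δ + 4 * Real.log ‖(famLift c t)^[n] (X t)‖
          ≤ Real.log ‖(famLift c t)^[n + 1] (X t)‖ := by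
        have hlow' : δ * ‖(famLift c t)^[n] (X t)‖ ^ 4
            ≤ ‖(famLift c t)^[n + 1] (X t)‖ := by rw [hit]; exact hlow
        have h := Real.log_le_log (by positivity) hlow'
        rwa [Real.log_mul hδpos.ne' (by positivity), Real.log_pow, Nat.cast_ofNat] at h
      obtain ⟨ih1, ih2⟩ := ih t ht
      have h4 : (4 : ℝ) ^ (n + 1) = 4 ^ n * 4 := pow_succ _ _
      constructor
      · nlinarith
      · nlinarith
  have hub : ∀ n, ∀ t ∈ K, ‖(famLift c t)^[n] (X t)‖ ≤ Real.exp (4 ^ n * L) := by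
    intro n t ht
    have hpos : 0 < ‖(famLift c t)^[n] (X t)‖ :=
      norm_pos_iff.2 (hZne n t (hKU ht) (hKt₀ t ht))
    rw [← Real.exp_log hpos]
    exact Real.exp_le_exp.2 (by have := (hiter n t ht).2; linarith)
  have hlb : ∀ n, ∀ t ∈ K, Real.exp (-(4 ^ n * L)) ≤ ‖(famLift c t)^[n] (X t)‖ := by
    intro n t ht
    have hpos : 0 < ‖(famLift c t)^[n] (X t)‖ :=
      norm_pos_iff.2 (hZne n t (hKU ht) (hKt₀ t ht))
    rw [← Real.exp_log hpos]
    exact Real.exp_le_exp.2 (by have := (hiter n t ht).1; linarith)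
  -- the constant M
  have hlog2 : 0 < Real.log 2 := Real.log_pos (by norm_num)
  have hlogr : 0 ≤ -Real.log r := by
    have := Real.log_neg hrpos hr1
    linarith
  refine ⟨L + (2 * L / Real.log 2) * (-Real.log r), ?_⟩
  intro n t ht0 htr
  obtain ⟨g₁, g₂, hg₁, hg₂, _, hev⟩ := ha n
  set G : ℂ → ℂ × ℂ := fun s =>
    if s = t₀ then (g₁ t₀, g₂ t₀) else ((s - t₀) ^ a n)⁻¹ • (famLift c s)^[n] (X s) with hGdef
  have hGt : ∀ s, s ≠ t₀ → G s = ((s - t₀) ^ a n)⁻¹ • (famLift c s)^[n] (X s) :=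
    fun s hs => if_neg hs
  have hGnear : G =ᶠ[nhds t₀] fun s => (g₁ s, g₂ s) := by
    filter_upwards [hev] with s hs
    by_cases h : s = t₀
    · subst h; simp [hGdef]
    · rw [hGt s h]
      have hp : (s - t₀) ^ a n ≠ 0 := pow_ne_zero _ (sub_ne_zero.2 h)
      have hZeq : (famLift c s)^[n] (X s) = ((s - t₀) ^ a n * g₁ s, (s - t₀) ^ a n * g₂ s) :=
        Prod.ext hs.1 hs.2
      rw [hZeq, Prod.smul_mk, smul_eq_mul, smul_eq_mul, inv_mul_cancel_left₀ hp,
        inv_mul_cancel_left₀ hp]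
  have hGdiff : DifferentiableOn ℂ G (Metric.ball t₀ R) := by
    intro x hx
    by_cases hx0 : x = t₀
    · subst hx0
      apply DifferentiableAt.differentiableWithinAt
      have hd : DifferentiableAt ℂ (fun s => (g₁ s, g₂ s)) x :=
        (hg₁.differentiableAt).prodMk (hg₂.differentiableAt)
      exact hd.congr_of_eventuallyEq hGnear
    · apply DifferentiableAt.differentiableWithinAt
      have hxU : x ∈ U := hballU hx
      have hZd : DifferentiableAt ℂ (fun s => (famLift c s)^[n] (X s)) x :=
        (hZdiff n).differentiableAt (hU.mem_nhds hxU)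
      have hpd : DifferentiableAt ℂ (fun s : ℂ => ((s - t₀) ^ a n)⁻¹) x := by
        apply DifferentiableAt.inv
        · exact (differentiableAt_id.sub_const t₀).pow _
        · exact pow_ne_zero _ (sub_ne_zero.2 hx0)
      refine (hpd.smul hZd).congr_of_eventuallyEq ?_
      filter_upwards [(isOpen_compl_singleton).mem_nhds hx0] with s hs using hGt s hs
  have hGcl : DiffContOnCl ℂ G (Metric.ball t₀ r) := by
    apply DifferentiableOn.diffContOnCl
    apply hGdiff.mono
    rw [closure_ball t₀ hrpos.ne']
    exact Metric.closedBall_subset_ball hrlt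
  have hrpow : (0:ℝ) < r ^ a n := pow_pos hrpos _
  have hfront : ∀ z ∈ frontier (Metric.ball t₀ r),
      ‖G z‖ ≤ Real.exp (4 ^ n * L) / r ^ a n := by
    rw [frontier_ball t₀ hrpos.ne']
    intro z hz
    have hzr : ‖z - t₀‖ = r := by
      rw [← Complex.dist_eq]; exact Metric.mem_sphere.mp hz
    have hzK : z ∈ K := hmemK z (by linarith) (le_of_eq hzr)
    have hz0 : z ≠ t₀ := hKt₀ z hzK
    rw [hGt z hz0, norm_smul, norm_inv, norm_pow, hzr, div_eq_inv_mul]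
    exact mul_le_mul_of_nonneg_left (hub n z hzK) (by positivity)
  have hmax : ∀ z ∈ Metric.closedBall t₀ r, ‖G z‖ ≤ Real.exp (4 ^ n * L) / r ^ a n := by
    intro z hz
    exact Complex.norm_le_of_forall_mem_frontier_norm_le Metric.isBounded_ball hGcl hfront
      (by rwa [closure_ball t₀ hrpos.ne'])
  -- bound on a n
  have ht₁d : ‖(t₀ + (r / 2 : ℝ)) - t₀‖ = r / 2 := by
    rw [add_sub_cancel_left, Complex.norm_real, Real.norm_eq_abs, abs_of_pos (by positivity)]
  have ht₁0 : (t₀ + (r / 2 : ℝ)) ≠ t₀ := hKt₀ _ ht₁K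
  have ht₁cb : (t₀ + (r / 2 : ℝ)) ∈ Metric.closedBall t₀ r := ht₁K.1
  have hApos : (0:ℝ) < (r / 2) ^ a n := pow_pos (by positivity) _
  have hG₁ : ‖G (t₀ + (r / 2 : ℝ))‖
      = ((r / 2) ^ a n)⁻¹ * ‖(famLift c (t₀ + (r / 2 : ℝ)))^[n] (X (t₀ + (r / 2 : ℝ)))‖ := by
    rw [hGt _ ht₁0, norm_smul, norm_inv, norm_pow, ht₁d]
  have hchain : ((r / 2) ^ a n)⁻¹ * Real.exp (-(4 ^ n * L))
      ≤ Real.exp (4 ^ n * L) / r ^ a n := by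
    calc ((r / 2) ^ a n)⁻¹ * Real.exp (-(4 ^ n * L))
        ≤ ((r / 2) ^ a n)⁻¹ *
          ‖(famLift c (t₀ + (r / 2 : ℝ)))^[n] (X (t₀ + (r / 2 : ℝ)))‖ := by
          exact mul_le_mul_of_nonneg_left (hlb n _ ht₁K) (by positivity)
      _ = ‖G (t₀ + (r / 2 : ℝ))‖ := hG₁.symm
      _ ≤ Real.exp (4 ^ n * L) / r ^ a n := hmax _ ht₁cb
  have h2a : (2:ℝ) ^ a n ≤ Real.exp (2 * (4 ^ n * L)) := by
    have hBA : r ^ a n = (r / 2) ^ a n * 2 ^ a n := by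
      rw [← mul_pow]; ring_nf
    have hx : Real.exp (-(4 ^ n * L)) = (Real.exp (4 ^ n * L))⁻¹ := Real.exp_neg _
    have hx2 : Real.exp (2 * (4 ^ n * L)) = Real.exp (4 ^ n * L) * Real.exp (4 ^ n * L) := by
      rw [two_mul, Real.exp_add]
    have hxpos : (0:ℝ) < Real.exp (4 ^ n * L) := Real.exp_pos _
    rw [hx2]
    have h2p : (0:ℝ) < (2:ℝ) ^ a n := by positivity
    have h := mul_le_mul_of_nonneg_right hchain
      (le_of_lt (mul_pos (mul_pos hApos h2p) hxpos))
    rw [hx, hBA] at h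
    have e1 : ((r / 2) ^ a n)⁻¹ * (Real.exp (4 ^ n * L))⁻¹ *
        ((r / 2) ^ a n * 2 ^ a n * Real.exp (4 ^ n * L)) = (2:ℝ) ^ a n := by
      field_simp
    have e2 : Real.exp (4 ^ n * L) / ((r / 2) ^ a n * 2 ^ a n) *
        ((r / 2) ^ a n * 2 ^ a n * Real.exp (4 ^ n * L))
        = Real.exp (4 ^ n * L) * Real.exp (4 ^ n * L) := by
      field_simp
    rw [e1, e2] at h
    exact h
  have han : (a n : ℝ) * Real.log 2 ≤ 2 * (4 ^ n * L) := by
    have h := Real.log_le_log (by positivity) h2a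
    rwa [Real.log_pow, Real.log_exp] at h
  have hcA : (a n : ℝ) ≤ 4 ^ n * (2 * L / Real.log 2) := by
    calc (a n : ℝ) = (a n : ℝ) * Real.log 2 / Real.log 2 := by field_simp
      _ ≤ 2 * (4 ^ n * L) / Real.log 2 := by gcongr
      _ = 4 ^ n * (2 * L / Real.log 2) := by ring
  -- final estimate
  have htne : t ≠ t₀ := by
    intro h; subst h; simp at ht0
  have htcb : t ∈ Metric.closedBall t₀ r := by
    rw [Metric.mem_closedBall, Complex.dist_eq]; exact htr
  have htU : t ∈ U := hclU htcb
  have comp : ∀ x : ℂ, ‖x / (t - t₀) ^ a n‖ = ‖((t - t₀) ^ a n)⁻¹ * x‖ := by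
    intro x; rw [div_eq_inv_mul]
  have hmaxeq : max (‖((famLift c t)^[n] (X t)).1 / (t - t₀) ^ a n‖)
      (‖((famLift c t)^[n] (X t)).2 / (t - t₀) ^ a n‖) = ‖G t‖ := by
    rw [comp, comp, hGt t htne, Prod.norm_def]
    rfl
  have hGpos : 0 < ‖G t‖ := by
    rw [hGt t htne]
    refine norm_pos_iff.2 (smul_ne_zero ?_ (hZne n t htU htne))
    exact inv_ne_zero (pow_ne_zero _ (sub_ne_zero.2 htne))
  rw [hmaxeq, div_le_iff₀ (by positivity : (0:ℝ) < 4 ^ n)]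
  have hle : Real.log ‖G t‖ ≤ 4 ^ n * L - (a n : ℝ) * Real.log r := by
    have h1 := Real.log_le_log hGpos (hmax t htcb)
    rwa [Real.log_div (Real.exp_ne_zero _) (pow_ne_zero _ hrpos.ne'), Real.log_exp,
      Real.log_pow] at h1
  have hprod : (a n : ℝ) * (-Real.log r) ≤ (4 ^ n * (2 * L / Real.log 2)) * (-Real.log r) :=
    mul_le_mul_of_nonneg_right hcA hlogr
  nlinarith
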